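/- Let G=(V,E) be a finite simple graph, m ∈ ℕ_{>0} and k ∈ ℕ. If there exists a vertex subset V′ ⊆ V with |V′| ≥ |V| − k such that the induced subgraph G[V′] satisfies ffn(G[V′]) ≤ m − k, then ffn(G) ≤ m. -/

import Mathlib

open scoped Classical
noncomputable section

variable {V : Type*}

/-- The neighbourhood of a set of vertices: all vertices outside `S` adjacent to some
vertex of `S`. -/
def nbhd [Fintype V] (G : SimpleGraph V) (S : Finset V) : Finset V :=
  Finset.univ.filter fun v => v ∉ S ∧ ∃ u ∈ S, G.Adj u v

/-- The burning sets of a strategy `F` (where `F i` is the firefighter set at time `i`):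
`B 0 = V` and `B (t+1) = (B t \ F (t+1)) ∪ N(B t \ F (t+1))`. -/
def burn [Fintype V] (G : SimpleGraph V) (F : ℕ → Finset V) : ℕ → Finset V
  | 0 => Finset.univ
  | t + 1 => (burn G F t \ F (t + 1)) ∪ nbhd G (burn G F t \ F (t + 1))

/-- `F` is a `T`-winning `m`-strategy for `G`. -/
def WinningStrategy [Fintype V] (G : SimpleGraph V) (m T : ℕ) (F : ℕ → Finset V) : Prop :=
  (∀ i, (F i).card ≤ m) ∧ burn G F T = ∅

/-- The firefighter number of `G`: the least `m` admitting a winning `m`-strategy. -/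
def ffn [Fintype V] (G : SimpleGraph V) : ℕ :=
  sInf {m | ∃ T F, WinningStrategy G m T F}


/-- Upper bound: if there is a vertex subset `V'` with `|V'| ≥ |V| - k` such that the
induced subgraph satisfies `ffn ≤ m - k`, then `ffn G ≤ m`. -/
theorem ffn_le_of_induced [Fintype V] (G : SimpleGraph V) (m k : ℕ) (hm : 0 < m)
    (V' : Set V) (hcard : Fintype.card V - k ≤ Fintype.card V')
    (hffn : (ffn (G.induce V') : ℤ) ≤ (m : ℤ) - k) :
    ffn G ≤ m := by
  classical
  set n := ffn (G.induce V') with hn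
  have hk : n + k ≤ m := by omega
  have hne : {n | ∃ T F, WinningStrategy (G.induce V') n T F}.Nonempty := by
    refine ⟨Fintype.card ↥V', 1, fun _ => Finset.univ,
      fun i => Finset.card_le_univ _, ?_⟩
    simp [burn, nbhd]
  obtain ⟨T', F', hF'card, hF'win⟩ : ∃ T F, WinningStrategy (G.induce V') n T F :=
    Nat.sInf_mem hne
  set C : Finset V := Finset.univ.filter (fun v => v ∉ V') with hC
  have hCV : ∀ v, v ∈ C ↔ v ∉ V' := by intro v; simp [hC]
  have hCcard : C.card ≤ k := by
    have h1 := Finset.card_filter_add_card_filter_not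
      (s := (Finset.univ : Finset V)) (p := fun v => v ∈ V')
    have h2 : (Finset.univ.filter (fun v => v ∈ V')).card = Fintype.card ↥V' := by
      simp [Fintype.card_subtype]
    rw [Finset.card_univ] at h1
    have h3 : (Finset.univ.filter (fun v => ¬ v ∈ V')).card = C.card := by rfl
    omega
  set F : ℕ → Finset V := fun i => (F' i).image Subtype.val ∪ C with hF
  have hinv : ∀ t, burn G F t ⊆ (burn (G.induce V') F' t).image Subtype.val ∪ C := by
    intro t
    induction t with
    | zero =>
      intro v _
      by_cases hv : v ∈ V'
      · exact Finset.mem_union_left _ (Finset.mem_image.mpr ⟨⟨v, hv⟩, Finset.mem_univ _, rfl⟩)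
      · exact Finset.mem_union_right _ ((hCV v).mpr hv)
    | succ t ih =>
      set D' := burn (G.induce V') F' t \ F' (t + 1) with hD'
      have hb' : burn (G.induce V') F' (t + 1) = D' ∪ nbhd (G.induce V') D' := by simp only [burn, hD']; congr!
      have hsub : burn G F t \ F (t + 1) ⊆ D'.image Subtype.val := by
        intro v hv
        rw [Finset.mem_sdiff] at hv
        obtain ⟨hv1, hv2⟩ := hv
        have hvC : v ∉ C := fun h => hv2 (Finset.mem_union_right _ h)
        rcases Finset.mem_union.mp (ih hv1) with h | h
        · obtain ⟨u, hu, huv⟩ := Finset.mem_image.mp h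
          refine Finset.mem_image.mpr ⟨u, ?_, huv⟩
          rw [hD', Finset.mem_sdiff]
          refine ⟨hu, fun hmem => ?_⟩
          exact hv2 (Finset.mem_union_left _ (Finset.mem_image.mpr ⟨u, hmem, huv⟩))
        · exact absurd h hvC
      have hb : burn G F (t + 1) = (burn G F t \ F (t + 1)) ∪ nbhd G (burn G F t \ F (t + 1)) := by simp only [burn]
      rw [hb]
      intro v hv
      rcases Finset.mem_union.mp hv with hv | hv
      · have hvD := hsub hv
        apply Finset.mem_union_left
        obtain ⟨u, hu, huv⟩ := Finset.mem_image.mp hvD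
        exact Finset.mem_image.mpr ⟨u, by rw [hb']; exact Finset.mem_union_left _ hu, huv⟩
      · simp only [nbhd, Finset.mem_filter] at hv
        obtain ⟨-, hvS, u, hu, hadj⟩ := hv
        have huD' : u ∈ D'.image Subtype.val := hsub hu
        by_cases hvV' : v ∈ V'
        · apply Finset.mem_union_left
          by_cases hvD : v ∈ D'.image Subtype.val
          · obtain ⟨w, hw, hwv⟩ := Finset.mem_image.mp hvD
            exact Finset.mem_image.mpr ⟨w, by rw [hb']; exact Finset.mem_union_left _ hw, hwv⟩
          · obtain ⟨u', hu', huu⟩ := Finset.mem_image.mp huD'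
            refine Finset.mem_image.mpr ⟨⟨v, hvV'⟩, ?_, rfl⟩
            rw [hb']
            apply Finset.mem_union_right
            simp only [nbhd, Finset.mem_filter]
            refine ⟨Finset.mem_univ _, ?_, u', hu', ?_⟩
            · intro h; exact hvD (Finset.mem_image.mpr ⟨_, h, rfl⟩)
            · subst huu; exact hadj
        · exact Finset.mem_union_right _ ((hCV v).mpr hvV')
  have hwin : WinningStrategy G m (T' + 1) F := by
    constructor
    · intro i
      calc (F i).card ≤ ((F' i).image Subtype.val).card + C.card := Finset.card_union_le _ _
        _ ≤ (F' i).card + k := add_le_add Finset.card_image_le hCcard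
        _ ≤ n + k := Nat.add_le_add_right (hF'card i) k
        _ ≤ m := hk
    · have hT : burn G F T' ⊆ C := by
        have h := hinv T'
        rw [hF'win] at h
        simpa using h
      have hb : burn G F (T' + 1)
          = (burn G F T' \ F (T' + 1)) ∪ nbhd G (burn G F T' \ F (T' + 1)) := by simp only [burn]
      rw [hb]
      have hemp : burn G F T' \ F (T' + 1) = ∅ := by
        apply Finset.sdiff_eq_empty_iff_subset.mpr
        exact hT.trans Finset.subset_union_right
      rw [hemp]
      simp [nbhd]
  exact Nat.sInf_le ⟨T' + 1, F, hwin⟩
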